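/- In every LC loop Q, the left nucleus N_λ equals the middle nucleus N_μ and this common nucleus is a normal subloop of Q. -/
import Mathlib


/-- A loop: binary operation with two-sided identity and unique divisions. -/
class Loop (Q : Type*) extends Mul Q, One Q where
  ld : Q → Q → Q   -- left division: `ld x y = x \ y`
  rd : Q → Q → Q   -- right division: `rd x y = x / y`
  one_mul : ∀ x : Q, 1 * x = x
  mul_one : ∀ x : Q, x * 1 = x
  mul_ld : ∀ x y : Q, x * ld x y = y
  ld_mul : ∀ x y : Q, ld x (x * y) = y
  rd_mul : ∀ x y : Q, rd x y * y = x
  mul_rd : ∀ x y : Q, rd (x * y) y = x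

namespace Loop
variable {Q : Type*} [Loop Q]
/-- left inverse `x^λ = 1 / x` -/
def linv (x : Q) : Q := rd 1 x
/-- right inverse `x^ρ = x \ 1` -/
def rinv (x : Q) : Q := ld x 1
/-- left nucleus -/
def Nl (Q : Type*) [Loop Q] : Set Q := {a | ∀ x y : Q, a * (x * y) = (a * x) * y}
/-- middle nucleus -/
def Nm (Q : Type*) [Loop Q] : Set Q := {a | ∀ x y : Q, x * (a * y) = (x * a) * y}
/-- right nucleus -/
def Nr (Q : Type*) [Loop Q] : Set Q := {a | ∀ x y : Q, (x * y) * a = x * (y * a)}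
/-- the nucleus -/
def N (Q : Type*) [Loop Q] : Set Q := Nl Q ∩ Nm Q ∩ Nr Q
/-- `S` is a subloop -/
def IsSubloop (S : Set Q) : Prop :=
  (1 : Q) ∈ S ∧ ∀ a ∈ S, ∀ b ∈ S, a * b ∈ S ∧ ld a b ∈ S ∧ rd a b ∈ S
/-- normality of a subloop via the standard equational characterization -/
def IsNormal (S : Set Q) : Prop :=
  IsSubloop S ∧ ∀ x y : Q,
    (x * ·) '' S = (· * x) '' S ∧
    (· * y) '' ((x * ·) '' S) = (x * ·) '' ((· * y) '' S) ∧
    (x * ·) '' ((y * ·) '' S) = ((x * y) * ·) '' S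
end Loop

set_option linter.unusedSectionVars false

namespace LoopAux
open Loop
variable {Q : Type*} [Loop Q]

lemma mem_nl {a : Q} : a ∈ Nl Q ↔ ∀ x y : Q, a * (x * y) = (a * x) * y := Iff.rfl
lemma mem_nm {a : Q} : a ∈ Nm Q ↔ ∀ x y : Q, x * (a * y) = (x * a) * y := Iff.rfl

lemma lcancel {x a b : Q} (h : x * a = x * b) : a = b := by
  have h2 := congrArg (ld x) h
  rwa [ld_mul, ld_mul] at h2

lemma rcancel {x a b : Q} (h : a * x = b * x) : a = b := by
  have h2 := congrArg (fun t => rd t x) h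
  simpa only [mul_rd] using h2

lemma mul_rinv (x : Q) : x * rinv x = 1 := mul_ld x 1
lemma linv_mul (x : Q) : linv x * x = 1 := rd_mul 1 x

variable (hlc : ∀ x y z : Q, x * (x * (y * z)) = (x * (x * y)) * z)
include hlc

/-- left alternativity -/
lemma la (x z : Q) : x * (x * z) = (x * x) * z := by
  have h := hlc x 1 z
  rwa [Loop.one_mul, Loop.mul_one] at h

/-- squares are in the left nucleus -/
lemma sq_nl (x : Q) : x * x ∈ Nl Q := by
  rw [mem_nl]
  intro y z
  rw [← la hlc x (y * z), hlc, la hlc]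

lemma nl_mul {p q : Q} (hp : p ∈ Nl Q) (hq : q ∈ Nl Q) : p * q ∈ Nl Q := by
  rw [mem_nl] at *
  intro x y
  rw [← hp q (x * y), hq x y, hp (q * x) y, hp q x]

lemma sq_mul_linv (x : Q) : (x * x) * linv x = x := by
  apply rcancel (x := x)
  rw [← sq_nl hlc x (linv x) x, linv_mul, Loop.mul_one]

lemma lip' (x y : Q) : x * (linv x * y) = y := by
  apply lcancel (x := x)
  rw [la hlc, sq_nl hlc x (linv x) y, sq_mul_linv hlc]

lemma lip (x y : Q) : linv x * (x * y) = y := by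
  apply lcancel (x := x)
  rw [lip' hlc]

lemma mul_linv (x : Q) : x * linv x = 1 := by
  apply lcancel (x := linv x)
  rw [lip hlc, Loop.mul_one]

lemma ld_eq (x y : Q) : ld x y = linv x * y := by
  apply lcancel (x := x)
  rw [mul_ld, lip' hlc]

lemma nl_linv {a : Q} (ha : a ∈ Nl Q) : linv a ∈ Nl Q := by
  rw [mem_nl] at *
  intro x y
  apply lcancel (x := a)
  rw [lip' hlc, ha, lip' hlc]

/-- key lemma: for `a ∈ Nl`, left translations by `y` and `a` "commute modulo Nl". -/
lemma key1 {a : Q} (ha : a ∈ Nl Q) (y : Q) :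
    ∃ n ∈ Nl Q, ∀ z : Q, y * (a * z) = (n * y) * z := by
  rw [mem_nl] at ha
  set s := (a * y) * (a * y) with hs_def
  have hs : s ∈ Nl Q := sq_nl hlc (a * y)
  have factA : ∀ w : Q, s * w = a * (y * (a * (y * w))) := by
    intro w
    rw [← la hlc (a * y) w, ← ha y ((a * y) * w), ← ha y w]
  set u := (linv a * linv a) * s with hu_def
  have hu : u ∈ Nl Q := nl_mul hlc (sq_nl hlc (linv a)) hs
  have factB : ∀ w : Q, u * w = linv a * (y * (a * (y * w))) := by
    intro w
    rw [hu_def, ← sq_nl hlc (linv a) s w, ← la hlc (linv a) (s * w), factA, lip hlc]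
  set n0 := u * (linv y * linv y) with hn0_def
  have hn0 : n0 ∈ Nl Q := nl_mul hlc hu (sq_nl hlc (linv y))
  have factC : ∀ w : Q, n0 * w = linv a * (y * (a * (linv y * w))) := by
    intro w
    rw [hn0_def]
    rw [mem_nl] at hu
    rw [← hu (linv y * linv y) w, ← la hlc (linv y) w, factB, lip' hlc]
  refine ⟨a * n0, nl_mul hlc (mem_nl.mpr ha) hn0, ?_⟩
  intro z
  have h1 : n0 * (y * z) = linv a * (y * (a * z)) := by
    rw [factC (y * z), lip hlc]
  have h2 : a * (n0 * (y * z)) = y * (a * z) := by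
    rw [h1, lip' hlc]
  rw [← h2, ha n0 (y * z), (nl_mul hlc (mem_nl.mpr ha) hn0) y z]

lemma nl_subset_nm : Nl Q ⊆ Nm Q := by
  intro a ha
  rw [mem_nm]
  intro x y
  obtain ⟨n, hn, h⟩ := key1 hlc ha x
  have hx : x * a = n * x := by
    have h1 := h 1
    rwa [Loop.mul_one, Loop.mul_one] at h1
  rw [h y, hx]

lemma nm_mul {p q : Q} (hp : p ∈ Nm Q) (hq : q ∈ Nm Q) : p * q ∈ Nm Q := by
  rw [mem_nm] at *
  intro x y
  rw [← hq p y, hp x (q * y), hq (x * p) y, ← hp x q]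

lemma nm_linv {a : Q} (ha : a ∈ Nm Q) : linv a ∈ Nm Q := by
  rw [mem_nm] at *
  have step1 : ∀ x : Q, (x * linv a) * a = x := by
    intro x
    apply rcancel (x := linv a)
    rw [← ha (x * linv a) (linv a), mul_linv hlc, Loop.mul_one]
  intro x y
  conv_rhs => rw [← lip' hlc a y]
  rw [ha (x * linv a) (linv a * y), step1]

/-- key lemma for the Nm side -/
lemma key2 {a : Q} (ha : a ∈ Nm Q) (y : Q) :
    ∃ m ∈ Nl Q, ∀ z : Q, a * (y * z) = y * ((m * a) * z) := by
  rw [mem_nm] at ha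
  set s := (y * a) * (y * a) with hs_def
  have hs : s ∈ Nl Q := sq_nl hlc (y * a)
  have factA : ∀ w : Q, s * w = y * (a * (y * (a * w))) := by
    intro w
    rw [← la hlc (y * a) w, ← ha y ((y * a) * w), ← ha y w]
  set u := (linv y * linv y) * s with hu_def
  have hu : u ∈ Nl Q := nl_mul hlc (sq_nl hlc (linv y)) hs
  have factB : ∀ w : Q, u * w = linv y * (a * (y * (a * w))) := by
    intro w
    rw [hu_def, ← sq_nl hlc (linv y) s w, ← la hlc (linv y) (s * w), factA, lip hlc]
  set m0 := u * (linv a * linv a) with hm0_def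
  have hm0 : m0 ∈ Nl Q := nl_mul hlc hu (sq_nl hlc (linv a))
  have factC : ∀ w : Q, m0 * w = linv y * (a * (y * (linv a * w))) := by
    intro w
    rw [hm0_def]
    rw [mem_nl] at hu
    rw [← hu (linv a * linv a) w, ← la hlc (linv a) w, factB, lip' hlc]
  refine ⟨m0, hm0, ?_⟩
  intro z
  have h1 : m0 * (a * z) = linv y * (a * (y * z)) := by
    rw [factC (a * z), lip hlc]
  rw [mem_nl] at hm0
  rw [← hm0 a z, h1, lip' hlc]

lemma nm_subset_nl : Nm Q ⊆ Nl Q := by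
  intro a ha
  rw [mem_nl]
  intro x y
  obtain ⟨m, hmNl, h⟩ := key2 hlc ha x
  have hma : m * a ∈ Nm Q := nm_mul hlc (nl_subset_nm hlc hmNl) ha
  have hx : a * x = x * (m * a) := by
    have h1 := h 1
    rwa [Loop.mul_one, Loop.mul_one] at h1
  rw [h y, (mem_nm.mp hma) x y, ← hx]

lemma nl_eq_nm : Nl Q = Nm Q :=
  Set.Subset.antisymm (nl_subset_nm hlc) (nm_subset_nl hlc)

/-- conjugation fact: `x*a ∈ (Nm Q)*x` -/
lemma conj1 {a : Q} (ha : a ∈ Nm Q) (x : Q) : ∃ n ∈ Nm Q, x * a = n * x := by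
  obtain ⟨n, hn, h⟩ := key1 hlc (nm_subset_nl hlc ha) x
  refine ⟨n, nl_subset_nm hlc hn, ?_⟩
  have h1 := h 1
  rwa [Loop.mul_one, Loop.mul_one] at h1

/-- conjugation fact: `a*x ∈ x*(Nm Q)` -/
lemma conj2 {a : Q} (ha : a ∈ Nm Q) (x : Q) : ∃ m ∈ Nm Q, a * x = x * m := by
  obtain ⟨m, hm, h⟩ := key2 hlc ha x
  refine ⟨m * a, nm_mul hlc (nl_subset_nm hlc hm) ha, ?_⟩
  have h1 := h 1
  rwa [Loop.mul_one, Loop.mul_one] at h1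

lemma one_nm : (1 : Q) ∈ Nm Q := by
  rw [mem_nm]
  intro x y
  rw [Loop.one_mul, Loop.mul_one]

lemma rd_eq_nm {a b : Q} (hb : b ∈ Nm Q) : rd a b = a * linv b := by
  have h : (a * linv b) * b = a := by
    rw [← (mem_nm.mp (nm_linv hlc hb)) a b, linv_mul, Loop.mul_one]
  conv_lhs => rw [← h]
  rw [mul_rd]

end LoopAux

open Loop LoopAux in
theorem stmt11 {Q : Type*} [Loop Q]
    (hlc : ∀ x y z : Q, x * (x * (y * z)) = (x * (x * y)) * z) :
    Nl Q = Nm Q ∧ IsNormal (Nm Q) := by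
  refine ⟨nl_eq_nm hlc, ⟨one_nm hlc, ?_⟩, ?_⟩
  · intro a ha b hb
    refine ⟨nm_mul hlc ha hb, ?_, ?_⟩
    · rw [ld_eq hlc]
      exact nm_mul hlc (nm_linv hlc ha) hb
    · rw [rd_eq_nm hlc hb]
      exact nm_mul hlc ha (nm_linv hlc hb)
  · intro x y
    refine ⟨?_, ?_, ?_⟩
    · ext t
      simp only [Set.mem_image]
      constructor
      · rintro ⟨a, ha, rfl⟩
        obtain ⟨n, hn, hxa⟩ := conj1 hlc ha x
        exact ⟨n, hn, hxa.symm⟩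
      · rintro ⟨a, ha, rfl⟩
        obtain ⟨m, hm, hax⟩ := conj2 hlc ha x
        exact ⟨m, hm, hax.symm⟩
    · rw [Set.image_image, Set.image_image]
      exact Set.image_congr fun a ha => ((mem_nm.mp ha) x y).symm
    · rw [Set.image_image]
      ext t
      simp only [Set.mem_image]
      constructor
      · rintro ⟨a, ha, rfl⟩
        obtain ⟨n, hn, h1⟩ := conj1 hlc ha y
        obtain ⟨n2, hn2, h2⟩ := conj1 hlc hn x
        obtain ⟨m2, hm2, h3⟩ := conj2 hlc hn2 (x * y)
        refine ⟨m2, hm2, ?_⟩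
        rw [← h3, (mem_nl.mp (nm_subset_nl hlc hn2)) x y, ← h2,
          ← (mem_nm.mp hn) x y, ← h1]
      · rintro ⟨a, ha, rfl⟩
        obtain ⟨n3, hn3, h1⟩ := conj1 hlc ha (x * y)
        obtain ⟨m3, hm3, h2⟩ := conj2 hlc hn3 x
        obtain ⟨m4, hm4, h3⟩ := conj2 hlc hm3 y
        refine ⟨m4, hm4, ?_⟩
        rw [← h3, (mem_nm.mp hm3) x y, ← h2, ← (mem_nl.mp (nm_subset_nl hlc hn3)) x y, ← h1]
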